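/- Suppose f* is upper semicontinuous on a locally compact metric space, φ is continuous, and x₀ is a strict local maximum of f* − φ, where f*(x) = limsup_{y→x, n→∞} f_n(y) for a uniformly bounded sequence (f_n). Then there exist a subsequence n_k → ∞ and points x_k → x₀ such that x_k is a local maximum of f_{n_k} − φ and f_{n_k}(x_k) → f*(x₀). -/

import Mathlib

open Filter Topology

/-- Upper relaxed semilimit `f*(x) = limsup_{y→x, n→∞} f_n(y)`. -/
noncomputable def relaxedLimsup' {X : Type*} [MetricSpace X] (f : ℕ → X → ℝ) (x : X) : ℝ :=
  ⨅ p : ℕ × {δ : ℝ // 0 < δ},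
    sSup {v : ℝ | ∃ n ≥ p.1, ∃ y : X, dist y x < p.2.1 ∧ v = f n y}

/-- An upper semicontinuous function bounded above on a nonempty compact set attains its
supremum there. -/
lemma usc_max_on_compact {X : Type*} [MetricSpace X] {K : Set X} (hK : IsCompact K)
    (hne : K.Nonempty) {g : X → ℝ} (hg : UpperSemicontinuous g)
    (hbdd : BddAbove (g '' K)) : ∃ z ∈ K, ∀ y ∈ K, g y ≤ g z := by
  set S := sSup (g '' K) with hSdef
  have hKne' : (g '' K).Nonempty := hne.image g
  have hv : ∀ j : ℕ, ∃ v ∈ K, S - 1 / (j + 1 : ℝ) < g v := by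
    intro j
    have hpos : (0 : ℝ) < 1 / (j + 1 : ℝ) := by positivity
    have h1 : S - 1 / (j + 1 : ℝ) < S := by linarith
    obtain ⟨w, hw, hw'⟩ := exists_lt_of_lt_csSup hKne' h1
    obtain ⟨v, hvK, rfl⟩ := hw
    exact ⟨v, hvK, hw'⟩
  choose v hvK hvlt using hv
  obtain ⟨z, hzK, ψ, hψ, hzt⟩ := hK.tendsto_subseq hvK
  refine ⟨z, hzK, fun y hy => ?_⟩
  have hyS : g y ≤ S := le_csSup hbdd ⟨y, hy, rfl⟩
  by_contra hc
  push_neg at hc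
  have hzS : g z < S := lt_of_lt_of_le hc hyS
  set y' := (g z + S) / 2 with hy'def
  have h1 : g z < y' := by rw [hy'def]; linarith
  have h2 : y' < S := by rw [hy'def]; linarith
  have hev : ∀ᶠ j in atTop, g (v (ψ j)) < y' := hzt.eventually (hg z y' h1)
  have hle : ∀ᶠ j : ℕ in atTop, S - 1 / ((j : ℝ) + 1) ≤ y' := by
    filter_upwards [hev] with j hj
    have hlt : S - 1 / ((ψ j : ℝ) + 1) < g (v (ψ j)) := hvlt (ψ j)
    have hmono : 1 / ((ψ j : ℝ) + 1) ≤ 1 / ((j : ℝ) + 1) := by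
      apply one_div_le_one_div_of_le (by positivity)
      have : (j : ℝ) ≤ (ψ j : ℝ) := by exact_mod_cast hψ.id_le j
      linarith
    linarith
  have hlim : Tendsto (fun j : ℕ => S - 1 / ((j : ℝ) + 1)) atTop (𝓝 S) := by
    have h0 : Tendsto (fun j : ℕ => 1 / ((j : ℝ) + 1)) atTop (𝓝 0) :=
      tendsto_one_div_add_atTop_nhds_zero_nat
    have h1 : Tendsto (fun j : ℕ => S - 1 / ((j : ℝ) + 1)) atTop (𝓝 (S - 0)) :=
      Tendsto.sub tendsto_const_nhds h0
    simpa using h1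
  have : S ≤ y' := le_of_tendsto hlim hle
  linarith

/-- Limits of values along sequences converging in space and diverging in index are bounded by
the relaxed upper semilimit. -/
lemma le_relaxedLimsup'_of_tendsto {X : Type*} [MetricSpace X] {f : ℕ → X → ℝ} {M : ℝ}
    (hM : ∀ n x, |f n x| ≤ M) {m : ℕ → ℕ} (hm : Tendsto m atTop atTop)
    {z : ℕ → X} {x' : X} (hz : Tendsto z atTop (𝓝 x')) {c : ℝ}
    (hc : Tendsto (fun j => f (m j) (z j)) atTop (𝓝 c)) :
    c ≤ relaxedLimsup' f x' := by
  apply le_ciInf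
  rintro ⟨N, δ, hδ⟩
  have hbdd : BddAbove {v : ℝ | ∃ n ≥ N, ∃ y : X, dist y x' < δ ∧ v = f n y} := by
    refine ⟨M, ?_⟩
    rintro v ⟨n, _, y, _, rfl⟩
    exact (abs_le.1 (hM n y)).2
  apply le_of_tendsto hc
  have h1 : ∀ᶠ j in atTop, N ≤ m j := hm.eventually_ge_atTop N
  have h2 : ∀ᶠ j in atTop, z j ∈ Metric.ball x' δ := hz (Metric.ball_mem_nhds x' hδ)
  filter_upwards [h1, h2] with j hj1 hj2
  exact le_csSup hbdd ⟨m j, hj1, z j, hj2, rfl⟩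

/-- Extraction of converging maximum points: a strict local maximum of `f* − φ` is the
limit of local maximum points of `f_{n_k} − φ` along a subsequence, with convergence of
the values. -/
theorem stmt11 {X : Type*} [MetricSpace X] [LocallyCompactSpace X]
    (f : ℕ → X → ℝ) (hbound : ∃ M : ℝ, ∀ n x, |f n x| ≤ M)
    (husc : ∀ n, UpperSemicontinuous (f n))
    (φ : X → ℝ) (hφ : Continuous φ) (x₀ : X)
    (hstrict : ∃ r > (0:ℝ), ∀ y ∈ Metric.ball x₀ r, y ≠ x₀ →
      relaxedLimsup' f y - φ y < relaxedLimsup' f x₀ - φ x₀) :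
    ∃ nk : ℕ → ℕ, StrictMono nk ∧ ∃ xk : ℕ → X,
      Tendsto xk atTop (nhds x₀) ∧
      (∀ k, IsLocalMax (fun y => f (nk k) y - φ y) (xk k)) ∧
      Tendsto (fun k => f (nk k) (xk k)) atTop (nhds (relaxedLimsup' f x₀)) := by
  obtain ⟨M, hM⟩ := hbound
  obtain ⟨r, hr, hstr⟩ := hstrict
  -- a compact closed ball around x₀ inside the strictness ball
  obtain ⟨K, hKc, hKn⟩ := exists_compact_mem_nhds x₀
  obtain ⟨ε, hε, hballK⟩ := Metric.mem_nhds_iff.1 hKn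
  set ρ : ℝ := min (ε / 2) (r / 2) with hρdef
  have hρ : 0 < ρ := lt_min (by linarith) (by linarith)
  have hρε : ρ < ε := lt_of_le_of_lt (min_le_left _ _) (by linarith)
  have hρr : ρ < r := lt_of_le_of_lt (min_le_right _ _) (by linarith)
  set B : Set X := Metric.closedBall x₀ ρ with hBdef
  have hBK : B ⊆ K := (Metric.closedBall_subset_ball hρε).trans hballK
  have hBc : IsCompact B := hKc.of_isClosed_subset Metric.isClosed_closedBall hBK
  have hBr : B ⊆ Metric.ball x₀ r := Metric.closedBall_subset_ball hρr
  have hx₀B : x₀ ∈ B := Metric.mem_closedBall_self hρ.le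
  set L : ℝ := relaxedLimsup' f x₀ with hLdef
  -- bddAbove of the defining sets, bddBelow of the range
  have hbddA : ∀ (x : X) (p : ℕ × {δ : ℝ // 0 < δ}),
      BddAbove {v : ℝ | ∃ n ≥ p.1, ∃ y : X, dist y x < p.2.1 ∧ v = f n y} := by
    rintro x p
    refine ⟨M, ?_⟩
    rintro v ⟨n, _, y, _, rfl⟩
    exact (abs_le.1 (hM n y)).2
  have hbddB : BddBelow (Set.range fun p : ℕ × {δ : ℝ // 0 < δ} =>
      sSup {v : ℝ | ∃ n ≥ p.1, ∃ y : X, dist y x₀ < p.2.1 ∧ v = f n y}) := by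
    refine ⟨-M, ?_⟩
    rintro _ ⟨p, rfl⟩
    have hmem : f p.1 x₀ ∈ {v : ℝ | ∃ n ≥ p.1, ∃ y : X, dist y x₀ < p.2.1 ∧ v = f n y} :=
      ⟨p.1, le_refl _, x₀, by simpa using p.2.2, rfl⟩
    exact le_trans (neg_le_of_abs_le (hM p.1 x₀)) (le_csSup (hbddA x₀ p) hmem)
  -- Lemma A': near-optimizers for the relaxed limsup at x₀
  have hA : ∀ j : ℕ, ∃ n ≥ j, ∃ y : X,
      dist y x₀ < min ρ (1 / ((j : ℝ) + 1)) ∧ L - 1 / ((j : ℝ) + 1) < f n y := by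
    intro j
    have hδpos : 0 < min ρ (1 / ((j : ℝ) + 1)) := lt_min hρ (by positivity)
    set p : ℕ × {δ : ℝ // 0 < δ} := (j, ⟨min ρ (1 / ((j : ℝ) + 1)), hδpos⟩) with hpdef
    have hLle : L ≤ sSup {v : ℝ | ∃ n ≥ p.1, ∃ y : X, dist y x₀ < p.2.1 ∧ v = f n y} :=
      ciInf_le hbddB p
    have hlt : L - 1 / ((j : ℝ) + 1) <
        sSup {v : ℝ | ∃ n ≥ p.1, ∃ y : X, dist y x₀ < p.2.1 ∧ v = f n y} := by
      have : (0 : ℝ) < 1 / ((j : ℝ) + 1) := by positivity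
      linarith
    have hne : {v : ℝ | ∃ n ≥ p.1, ∃ y : X, dist y x₀ < p.2.1 ∧ v = f n y}.Nonempty :=
      ⟨f p.1 x₀, p.1, le_refl _, x₀, by rw [dist_self]; exact hδpos, rfl⟩
    obtain ⟨w, hw, hw'⟩ := exists_lt_of_lt_csSup hne hlt
    obtain ⟨n, hn, y, hy, rfl⟩ := hw
    exact ⟨n, hn, y, hy, hw'⟩
  choose n hnge y hydist hyval using hA
  -- maximizers of f k − φ on B
  have hmax : ∀ k : ℕ, ∃ zk ∈ B, ∀ w ∈ B, f k w - φ w ≤ f k zk - φ zk := by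
    intro k
    have husck : UpperSemicontinuous (fun w => f k w - φ w) := by
      have : UpperSemicontinuous (fun w => f k w + (-φ w)) :=
        (husc k).add (hφ.neg.upperSemicontinuous)
      simpa [sub_eq_add_neg] using this
    have hbddg : BddAbove ((fun w => f k w - φ w) '' B) := by
      obtain ⟨C, hC⟩ := ((hBc.image hφ.neg).bddAbove)
      refine ⟨M + C, ?_⟩
      rintro _ ⟨w, hwB, rfl⟩
      have h1 : f k w ≤ M := (abs_le.1 (hM k w)).2
      have h2 : -φ w ≤ C := hC ⟨w, hwB, rfl⟩
      simp only [sub_eq_add_neg]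
      linarith
    exact usc_max_on_compact hBc ⟨x₀, hx₀B⟩ husck hbddg
  choose z hzB hzmax using hmax
  -- extract convergent subsequence of the maximizers along indices n j
  obtain ⟨xb, hxbB, ψ₁, hψ₁, ht1⟩ := hBc.tendsto_subseq (fun j => hzB (n j))
  -- extract convergence of the values
  have hvIcc : ∀ j : ℕ, f (n (ψ₁ j)) (z (n (ψ₁ j))) ∈ Set.Icc (-M) M :=
    fun j => abs_le.1 (hM _ _)
  obtain ⟨ℓ, _, ψ₂, hψ₂, ht2⟩ := (isCompact_Icc (a := -M) (b := M)).tendsto_subseq hvIcc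
  set σ : ℕ → ℕ := ψ₁ ∘ ψ₂ with hσdef
  have hσ : StrictMono σ := hψ₁.comp hψ₂
  set m : ℕ → ℕ := fun j => n (σ j) with hmdef
  set zz : ℕ → X := fun j => z (m j) with hzzdef
  have hmt : Tendsto m atTop atTop := by
    apply tendsto_atTop_mono (fun j => le_trans (hσ.id_le j) (hnge (σ j)))
    exact tendsto_id
  have hzt : Tendsto zz atTop (𝓝 xb) := ht1.comp hψ₂.tendsto_atTop
  have hvt : Tendsto (fun j => f (m j) (zz j)) atTop (𝓝 ℓ) := ht2
  -- ℓ ≤ f*(xb)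
  have hℓle : ℓ ≤ relaxedLimsup' f xb := le_relaxedLimsup'_of_tendsto hM hmt hzt hvt
  -- 1/(σ j + 1) → 0 and y ∘ σ → x₀
  have hinv : Tendsto (fun j => 1 / ((σ j : ℝ) + 1)) atTop (𝓝 0) :=
    tendsto_one_div_add_atTop_nhds_zero_nat.comp hσ.tendsto_atTop
  have hyσ : Tendsto (fun j => y (σ j)) atTop (𝓝 x₀) := by
    apply tendsto_iff_dist_tendsto_zero.2
    apply squeeze_zero (fun j => dist_nonneg)
      (fun j => le_of_lt (lt_of_lt_of_le (hydist (σ j)) (min_le_right _ _))) hinv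
  -- key inequality and limit: L − φ x₀ ≤ ℓ − φ xb
  have hkey : L - φ x₀ ≤ ℓ - φ xb := by
    have hg1 : Tendsto (fun j : ℕ => L - 1 / ((σ j : ℝ) + 1)) atTop (𝓝 (L - 0)) :=
      Tendsto.sub tendsto_const_nhds hinv
    have hg2 : Tendsto (fun j : ℕ => φ (y (σ j))) atTop (𝓝 (φ x₀)) :=
      (hφ.tendsto x₀).comp hyσ
    have hglim : Tendsto (fun j : ℕ => L - 1 / ((σ j : ℝ) + 1) - φ (y (σ j))) atTop
        (𝓝 (L - φ x₀)) := by
      have := hg1.sub hg2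
      simpa using this
    have hhlim : Tendsto (fun j => f (m j) (zz j) - φ (zz j)) atTop (𝓝 (ℓ - φ xb)) :=
      hvt.sub ((hφ.tendsto xb).comp hzt)
    refine le_of_tendsto_of_tendsto' hglim hhlim (fun j => ?_)
    have hyB : y (σ j) ∈ B :=
      Metric.mem_closedBall.2 (le_of_lt (lt_of_lt_of_le (hydist (σ j)) (min_le_left _ _)))
    have h1 : f (m j) (y (σ j)) - φ (y (σ j)) ≤ f (m j) (zz j) - φ (zz j) :=
      hzmax (m j) (y (σ j)) hyB
    have h2 : L - 1 / ((σ j : ℝ) + 1) < f (m j) (y (σ j)) := hyval (σ j)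
    linarith
  -- xb = x₀
  have hxbx₀ : xb = x₀ := by
    by_contra hne
    have := hstr xb (hBr hxbB) hne
    linarith
  rw [hxbx₀] at hzt hℓle hkey
  have hℓL : ℓ = L := by linarith [hℓle, hkey, hLdef.le, hLdef.ge]
  -- zz eventually in the open ball
  have hev : ∀ᶠ j in atTop, zz j ∈ Metric.ball x₀ ρ := hzt (Metric.ball_mem_nhds x₀ hρ)
  obtain ⟨J, hJ⟩ := eventually_atTop.1 hev
  -- extract a strictly monotone subsequence of m, starting beyond J
  obtain ⟨τ, hτ, hmτ⟩ := strictMono_subseq_of_tendsto_atTop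
    (hmt.comp (tendsto_atTop_atTop_of_monotone (fun a b h => by omega)
      (fun b => ⟨b, by omega⟩) : Tendsto (fun j : ℕ => j + J) atTop atTop))
  set ψ₃ : ℕ → ℕ := fun k => τ k + J with hψ₃def
  have hψ₃ : StrictMono ψ₃ := fun a b h => by
    have := hτ h; simp only [hψ₃def]; omega
  have hψ₃J : ∀ k, J ≤ ψ₃ k := fun k => by simp [hψ₃def]
  refine ⟨fun k => m (ψ₃ k), ?_, fun k => zz (ψ₃ k), ?_, ?_, ?_⟩
  · intro a b h
    exact hmτ h
  · exact hzt.comp hψ₃.tendsto_atTop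
  · intro k
    have hmem : zz (ψ₃ k) ∈ Metric.ball x₀ ρ := hJ (ψ₃ k) (hψ₃J k)
    have hnhds : B ∈ 𝓝 (zz (ψ₃ k)) :=
      mem_of_superset (Metric.isOpen_ball.mem_nhds hmem) Metric.ball_subset_closedBall
    exact Filter.eventually_of_mem hnhds (fun w hw => hzmax (m (ψ₃ k)) w hw)
  · have : Tendsto (fun k => f (m (ψ₃ k)) (zz (ψ₃ k))) atTop (𝓝 ℓ) :=
      hvt.comp hψ₃.tendsto_atTop
    rw [hℓL] at this
    exact this
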